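/- Let H be a free monoid and ρ: H → ℤ a monoid homomorphism (a Gessel pair). Define: π is a minus-path if π is the identity or ρ(π) is negative and strictly less than ρ of every other H-head of π; π is a zero-path if ρ(π) = 0 and every H-head of π has nonnegative ρ-value; π is a plus-path if every H-head of π other than the identity has positive ρ-value. Then every element π ∈ H has a unique factorization π = π₋ π₀ π₊ with π₋ a minus-path, π₀ a zero-path, and π₊ a plus-path. -/

import Mathlib

/-- The value under the homomorphism induced by `ρ : α → ℤ` of an element of
the free monoid on `α` (represented as a list of its prime factors). -/
def rhoVal {α : Type*} (ρ : α → ℤ) (l : List α) : ℤ := (l.map ρ).sum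

/-- `π` is a *minus-path*: it is the identity, or its `ρ`-value is negative and
strictly less than the `ρ`-values of all its other `H`-heads (the `H`-heads of
`π = h₁⋯h_m` being the prefixes `h₁⋯h_i`, `i = 0,…,m`). -/
def IsMinusPath {α : Type*} (ρ : α → ℤ) (l : List α) : Prop :=
  l = [] ∨ (rhoVal ρ l < 0 ∧ ∀ i < l.length, rhoVal ρ l < rhoVal ρ (l.take i))

/-- `π` is a *zero-path*: its `ρ`-value is `0` and every `H`-head has
nonnegative `ρ`-value. -/
def IsZeroPath {α : Type*} (ρ : α → ℤ) (l : List α) : Prop :=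
  rhoVal ρ l = 0 ∧ ∀ i : ℕ, 0 ≤ rhoVal ρ (l.take i)

/-- `π` is a *plus-path*: every `H`-head other than the identity has positive
`ρ`-value. -/
def IsPlusPath {α : Type*} (ρ : α → ℤ) (l : List α) : Prop :=
  ∀ i : ℕ, 0 < i → i ≤ l.length → 0 < rhoVal ρ (l.take i)

section Aux
variable {α : Type*} (ρ : α → ℤ)

lemma rhoVal_nil : rhoVal ρ ([] : List α) = 0 := rfl

lemma rhoVal_append (a b : List α) : rhoVal ρ (a ++ b) = rhoVal ρ a + rhoVal ρ b := by
  simp [rhoVal]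

lemma rhoVal_take_append (a b : List α) (i : ℕ) :
    rhoVal ρ ((a ++ b).take i) = rhoVal ρ (a.take i) + rhoVal ρ (b.take (i - a.length)) := by
  rw [List.take_append, rhoVal_append]

lemma rhoVal_take_of_le (l : List α) {i : ℕ} (h : l.length ≤ i) :
    rhoVal ρ (l.take i) = rhoVal ρ l := by rw [List.take_of_length_le h]

lemma rhoVal_drop_take (l : List α) {k : ℕ} (hk : k ≤ l.length) (j : ℕ) :
    rhoVal ρ ((l.drop k).take j) = rhoVal ρ (l.take (k + j)) - rhoVal ρ (l.take k) := by
  have h := rhoVal_take_append ρ (l.take k) (l.drop k) (k + j)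
  rw [List.take_append_drop] at h
  rw [List.length_take, min_eq_left hk] at h
  rw [List.take_take, min_eq_right (Nat.le_add_right _ _)] at h
  rw [Nat.add_sub_cancel_left] at h
  omega

/-- The index conditions on a pair `(k, K)` equivalent to the triple
`(π.take k, (π.drop k).take (K - k), π.drop K)` being a valid factorization. -/
def Good (π : List α) (k K : ℕ) : Prop :=
  k ≤ K ∧ K ≤ π.length ∧
  (∀ i < k, rhoVal ρ (π.take k) < rhoVal ρ (π.take i)) ∧
  (k = 0 ∨ rhoVal ρ (π.take k) < 0) ∧
  rhoVal ρ (π.take K) = rhoVal ρ (π.take k) ∧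
  (∀ i, k ≤ i → i ≤ K → rhoVal ρ (π.take k) ≤ rhoVal ρ (π.take i)) ∧
  (∀ i, K < i → i ≤ π.length → rhoVal ρ (π.take K) < rhoVal ρ (π.take i))

lemma good_global_min {π : List α} {k K : ℕ} (h : Good ρ π k K) :
    ∀ i ≤ π.length, rhoVal ρ (π.take k) ≤ rhoVal ρ (π.take i) := by
  obtain ⟨hkK, hKn, hmin, -, hKk, hmid, hafter⟩ := h
  intro i hi
  rcases lt_or_ge i k with h1 | h1
  · exact (hmin i h1).le
  rcases le_or_gt i K with h2 | h2
  · exact hmid i h1 h2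
  · rw [← hKk]; exact (hafter i h2 hi).le

lemma good_unique {π : List α} {k K k' K' : ℕ}
    (h : Good ρ π k K) (h' : Good ρ π k' K') : k = k' ∧ K = K' := by
  have hm := good_global_min ρ h
  have hm' := good_global_min ρ h'
  have hkn : k ≤ π.length := le_trans h.1 h.2.1
  have hkn' : k' ≤ π.length := le_trans h'.1 h'.2.1
  have hkk' : rhoVal ρ (π.take k) = rhoVal ρ (π.take k') :=
    le_antisymm (hm k' hkn') (hm' k hkn)
  have hk : k = k' := by
    by_contra hne
    rcases Nat.lt_or_ge k k' with hlt | hge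
    · have := h'.2.2.1 k hlt
      linarith [hkk'.le]
    · have hlt : k' < k := lt_of_le_of_ne hge (Ne.symm hne)
      have := h.2.2.1 k' hlt
      linarith [hkk'.ge]
  subst hk
  have hKK' : rhoVal ρ (π.take K) = rhoVal ρ (π.take K') := by
    rw [h.2.2.2.2.1, h'.2.2.2.2.1]
  refine ⟨rfl, ?_⟩
  by_contra hne
  rcases Nat.lt_or_ge K K' with hlt | hge
  · have := h.2.2.2.2.2.2 K' hlt h'.2.1
    linarith [hKK'.le]
  · have hlt : K' < K := lt_of_le_of_ne hge (Ne.symm hne)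
    have := h'.2.2.2.2.2.2 K hlt h.2.1
    linarith [hKK'.ge]

lemma good_exists (π : List α) : ∃ k K, Good ρ π k K := by
  classical
  set n := π.length with hn
  set s : ℕ → ℤ := fun i => rhoVal ρ (π.take i) with hs
  have hP : ∃ i, i ≤ n ∧ ∀ j ≤ n, s i ≤ s j := by
    obtain ⟨b, hb, hbmin⟩ := Finset.exists_min_image (Finset.range (n + 1)) s
      ⟨0, Finset.mem_range.mpr (Nat.succ_pos n)⟩
    exact ⟨b, Nat.lt_succ_iff.mp (Finset.mem_range.mp hb),
      fun j hj => hbmin j (Finset.mem_range.mpr (Nat.lt_succ_of_le hj))⟩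
  set k := Nat.find hP with hk
  obtain ⟨hkn, hkmin⟩ := Nat.find_spec hP
  set F : Finset ℕ := (Finset.range (n + 1)).filter (fun i => s i = s k) with hF
  have hkF : k ∈ F := by
    simp [hF, Finset.mem_filter, Finset.mem_range, Nat.lt_succ_of_le hkn]; exact hkn
  set K := F.max' ⟨k, hkF⟩ with hK
  have hKF : K ∈ F := F.max'_mem _
  have hKn : K ≤ n := by
    have := (Finset.mem_filter.mp hKF).1
    exact Nat.lt_succ_iff.mp (Finset.mem_range.mp this)
  have hsK : s K = s k := (Finset.mem_filter.mp hKF).2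
  have hkK : k ≤ K := Finset.le_max' F k hkF
  refine ⟨k, K, hkK, hKn, ?_, ?_, hsK, ?_, ?_⟩
  · -- strict minimum before k
    intro i hik
    show s k < s i
    have hle : s k ≤ s i := hkmin i (le_trans hik.le hkn)
    rcases lt_or_eq_of_le hle with h | h
    · exact h
    · exfalso
      have : i ≤ n ∧ ∀ j ≤ n, s i ≤ s j := ⟨le_trans hik.le hkn, fun j hj => h ▸ hkmin j hj⟩
      exact Nat.find_min hP hik this
  · -- k = 0 ∨ s k < 0
    have h0 : s 0 = 0 := by simp [hs, rhoVal]
    have hle : s k ≤ 0 := h0 ▸ hkmin 0 (Nat.zero_le n)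
    rcases lt_or_eq_of_le hle with h | h
    · exact Or.inr h
    · left
      have : (0 : ℕ) ≤ n ∧ ∀ j ≤ n, s 0 ≤ s j := ⟨Nat.zero_le n, fun j hj => by
        rw [h0, ← h]; exact hkmin j hj⟩
      exact Nat.le_zero.mp (Nat.find_le this)
  · intro i hki hiK
    exact hkmin i (le_trans hiK hKn)
  · intro i hKi hin
    show s K < s i
    have hle : s k ≤ s i := hkmin i hin
    rcases lt_or_eq_of_le hle with h | h
    · rw [hsK]; exact h
    · exfalso
      have hiF : i ∈ F := by
        simp [hF, Finset.mem_filter, Finset.mem_range, Nat.lt_succ_of_le hin, h.symm]; exact hin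
      exact absurd (Finset.le_max' F i hiF) (not_le.mpr hKi)

lemma valid_of_good {π : List α} {k K : ℕ} (h : Good ρ π k K) :
    IsMinusPath ρ (π.take k) ∧ IsZeroPath ρ ((π.drop k).take (K - k)) ∧
    IsPlusPath ρ (π.drop K) ∧
    π = π.take k ++ (π.drop k).take (K - k) ++ π.drop K := by
  obtain ⟨hkK, hKn, hmin, hneg, hKk, hmid, hafter⟩ := h
  have hkn : k ≤ π.length := le_trans hkK hKn
  have hlen_tk : (π.take k).length = k := by rw [List.length_take, min_eq_left hkn]
  have hdt : ∀ j, rhoVal ρ ((π.drop k).take j)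
      = rhoVal ρ (π.take (k + j)) - rhoVal ρ (π.take k) := rhoVal_drop_take ρ π hkn
  have hdtK : ∀ j, rhoVal ρ ((π.drop K).take j)
      = rhoVal ρ (π.take (K + j)) - rhoVal ρ (π.take K) := rhoVal_drop_take ρ π hKn
  refine ⟨?_, ⟨?_, ?_⟩, ?_, ?_⟩
  · -- minus path
    rcases hneg with h0 | hneg
    · left; simp [h0]
    · right
      refine ⟨hneg, ?_⟩
      intro i hi
      rw [hlen_tk] at hi
      rw [List.take_take, min_eq_left hi.le]
      exact hmin i hi
  · -- zero path: total value 0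
    rw [hdt (K - k), Nat.add_sub_cancel' hkK, hKk]
    ring
  · -- zero path: heads nonneg
    intro j
    rw [List.take_take, hdt (min j (K - k))]
    have h1 : k ≤ k + min j (K - k) := Nat.le_add_right _ _
    have h2 : k + min j (K - k) ≤ K := by omega
    have := hmid (k + min j (K - k)) h1 h2
    omega
  · -- plus path
    intro j hj hjlen
    rw [List.length_drop] at hjlen
    rw [hdtK j]
    have := hafter (K + j) (by omega) (by omega)
    omega
  · -- decomposition
    conv_lhs => rw [← List.take_append_drop k π]
    rw [List.append_assoc]
    congr 1
    conv_lhs => rw [← List.take_append_drop (K - k) (π.drop k)]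
    congr 1
    rw [List.drop_drop, Nat.add_sub_cancel' hkK]

lemma good_of_valid {π a b c : List α}
    (hma : IsMinusPath ρ a) (hzb : IsZeroPath ρ b) (hpc : IsPlusPath ρ c)
    (hπ : π = a ++ b ++ c) :
    Good ρ π a.length (a.length + b.length) ∧
      a = π.take a.length ∧
      b = (π.drop a.length).take ((a.length + b.length) - a.length) ∧
      c = π.drop (a.length + b.length) := by
  have hn : π.length = a.length + b.length + c.length := by rw [hπ]; simp; omega
  have hta : π.take a.length = a := by
    rw [hπ, List.append_assoc, List.take_left]
  have hdrop : π.drop a.length = b ++ c := by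
    rw [hπ, List.append_assoc, List.drop_left]
  have htb : (π.drop a.length).take ((a.length + b.length) - a.length) = b := by
    rw [hdrop, Nat.add_sub_cancel_left, List.take_left]
  have hdc : π.drop (a.length + b.length) = c := by
    rw [← List.drop_drop, hdrop, List.drop_left]
  have hs : ∀ i, rhoVal ρ (π.take i) =
      rhoVal ρ (a.take i) + rhoVal ρ (b.take (i - a.length))
        + rhoVal ρ (c.take (i - (a.length + b.length))) := by
    intro i
    rw [hπ, rhoVal_take_append, rhoVal_take_append, List.length_append]
  have hsk : rhoVal ρ (π.take a.length) = rhoVal ρ a := by rw [hta]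
  have hsK : rhoVal ρ (π.take (a.length + b.length)) = rhoVal ρ a + rhoVal ρ b := by
    rw [hs (a.length + b.length),
      rhoVal_take_of_le ρ a (Nat.le_add_right _ _), Nat.add_sub_cancel_left,
      rhoVal_take_of_le ρ b le_rfl, Nat.sub_self, List.take_zero, rhoVal_nil]
    ring
  refine ⟨⟨Nat.le_add_right _ _, by omega, ?_, ?_, ?_, ?_, ?_⟩, hta.symm, htb.symm, hdc.symm⟩
  · -- strict min before k
    intro i hi
    rcases hma with h0 | ⟨hneg, hmin⟩
    · exfalso; simp [h0] at hi
    · rw [hsk, hs i]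
      have h1 : i - a.length = 0 := by omega
      have h2 : i - (a.length + b.length) = 0 := by omega
      simp only [h1, h2, List.take_zero, rhoVal_nil, add_zero]
      exact hmin i hi
  · -- k = 0 or negative
    rcases hma with h0 | ⟨hneg, -⟩
    · left; rw [h0]; rfl
    · right; rw [hsk]; exact hneg
  · -- s K = s k
    rw [hsK, hsk, hzb.1]; ring
  · -- middle
    intro i hki hiK
    rw [hsk, hs i, rhoVal_take_of_le ρ a hki]
    have h2 : i - (a.length + b.length) = 0 := by omega
    rw [h2, List.take_zero, rhoVal_nil]
    have := hzb.2 (i - a.length)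
    omega
  · -- after
    intro i hKi hin
    rw [hsK, hs i, rhoVal_take_of_le ρ a (by omega),
      rhoVal_take_of_le ρ b (by omega)]
    have := hpc (i - (a.length + b.length)) (by omega) (by omega)
    omega

end Aux

/-- **Factorization lemma for Gessel pairs** (Lemma 3.1).
Let `(H, ρ)` be a Gessel pair: a free monoid `H` (realized as the lists of
prime factors, i.e. the free monoid on the set `α` of primes) together with a
monoid homomorphism `ρ : H → ℤ` (induced by `ρ : α → ℤ`).  Then every `π ∈ H`
has a unique factorization `π = π₋ π₀ π₊` with `π₋` a minus-path, `π₀` a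
zero-path, and `π₊` a plus-path. -/
theorem gessel_pair_unique_factorization {α : Type*} (ρ : α → ℤ) (π : List α) :
    ∃! p : List α × List α × List α,
      IsMinusPath ρ p.1 ∧ IsZeroPath ρ p.2.1 ∧ IsPlusPath ρ p.2.2 ∧
      π = p.1 ++ p.2.1 ++ p.2.2 := by

  obtain ⟨k, K, hg⟩ := good_exists ρ π
  obtain ⟨h1, h2, h3, h4⟩ := valid_of_good ρ hg
  refine ⟨(π.take k, (π.drop k).take (K - k), π.drop K), ⟨h1, h2, h3, h4⟩, ?_⟩
  rintro ⟨a, b, c⟩ ⟨ha, hb, hc, hd⟩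
  dsimp only at ha hb hc hd
  obtain ⟨hg', ha', hb', hc'⟩ := good_of_valid ρ ha hb hc hd
  obtain ⟨hk, hK⟩ := good_unique ρ hg' hg
  simp only [Prod.mk.injEq]
  refine ⟨?_, ?_, ?_⟩
  · rw [ha', hk]
  · rw [hb', hK, hk]
  · rw [hc', hK]
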